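/- Let ξ be a real irrational number. Then τ(ξ) ≤ 1/(μ(ξ) − 1), where τ(ξ) = sup T(ξ) (with sup ∅ = 0) and T(ξ) is the set of all τ > 0 for which there exist integer sequences (u_n), (v_n) with u_n ≠ 0 for all n, u_n ξ − v_n → 0, |u_{n+1} ξ − v_{n+1}| = |u_n ξ − v_n|^{1 + o(1)}, and |u_n ξ − v_n| ≤ |u_n|^{−τ + o(1)}. -/

import Mathlib

open Filter Topology

/-- The irrationality exponent of a real number, as an extended real:
the infimum of all real `μ` such that `|ξ - p/q| > 1/q^μ` for all integers `p, q`
with `q` sufficiently large (`⊤` if no such real `μ` exists). -/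
noncomputable def irrationalityExponent (ξ : ℝ) : EReal :=
  sInf {x : EReal | ∃ μ : ℝ, x = (μ : EReal) ∧
    ∀ᶠ q : ℕ in atTop, ∀ p : ℤ, |ξ - (p : ℝ) / (q : ℝ)| > 1 / (q : ℝ) ^ μ}

/-- The set `T(ξ)` of all `τ > 0` for which there exist integer sequences `(u_n)`, `(v_n)`
with `u_n ≠ 0`, `u_n ξ - v_n → 0`, `|u_{n+1} ξ - v_{n+1}| = |u_n ξ - v_n|^{1+o(1)}` and
`|u_n ξ - v_n| ≤ |u_n|^{-τ+o(1)}`. -/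
def TSet (ξ : ℝ) : Set ℝ :=
  {τ : ℝ | 0 < τ ∧ ∃ u v : ℕ → ℤ, (∀ n, u n ≠ 0) ∧
    Tendsto (fun n => (u n : ℝ) * ξ - (v n : ℝ)) atTop (𝓝 0) ∧
    (∃ δ : ℕ → ℝ, Tendsto δ atTop (𝓝 0) ∧ ∀ n,
      |(u (n + 1) : ℝ) * ξ - (v (n + 1) : ℝ)| = |(u n : ℝ) * ξ - (v n : ℝ)| ^ (1 + δ n)) ∧
    (∃ δ : ℕ → ℝ, Tendsto δ atTop (𝓝 0) ∧ ∀ n,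
      |(u n : ℝ) * ξ - (v n : ℝ)| ≤ |(u n : ℝ)| ^ (-τ + δ n))}

/-- The set `T'(ξ)` of all `τ > 0` for which there exist integer sequences `(u_n)`, `(v_n)`
and `0 < α < 1 < β` with `|u_n ξ - v_n|^{1/n} → α`, `limsup |u_n|^{1/n} ≤ β` and
`τ = -log α / log β`. -/
def TSet' (ξ : ℝ) : Set ℝ :=
  {τ : ℝ | 0 < τ ∧ ∃ u v : ℕ → ℤ, ∃ α β : ℝ, 0 < α ∧ α < 1 ∧ 1 < β ∧
    Tendsto (fun n => |(u n : ℝ) * ξ - (v n : ℝ)| ^ (1 / (n : ℝ))) atTop (𝓝 α) ∧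
    limsup (fun n => ((|(u n : ℝ)| ^ (1 / (n : ℝ)) : ℝ) : EReal)) atTop ≤ (β : EReal) ∧
    τ = -Real.log α / Real.log β}

/-- The set `T''(ξ)` of all `τ > 0` such that, for any increasing sequence `(Q_n)` of
positive integers, there exist integer sequences `(u_n)`, `(v_n)` with
`|u_n| ≤ Q_n^{1+o(1)}` and `|u_n ξ - v_n| = Q_n^{-τ+o(1)}`. -/
def TSet'' (ξ : ℝ) : Set ℝ :=
  {τ : ℝ | 0 < τ ∧ ∀ Q : ℕ → ℕ, StrictMono Q → (∀ n, 0 < Q n) →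
    ∃ u v : ℕ → ℤ,
      (∃ δ : ℕ → ℝ, Tendsto δ atTop (𝓝 0) ∧ ∀ n,
        |(u n : ℝ)| ≤ (Q n : ℝ) ^ (1 + δ n)) ∧
      (∃ δ : ℕ → ℝ, Tendsto δ atTop (𝓝 0) ∧ ∀ n,
        |(u n : ℝ) * ξ - (v n : ℝ)| = (Q n : ℝ) ^ (-τ + δ n))}

/-- The set `T'''(ξ)` of all `τ > 0` such that, for any sequences `(Q_n)`, `(ε_n)` of
positive real numbers with `Q_n → ∞`, `ε_n → 0` and `ε_n ≥ Q_n^{-τ+o(1)}`, there exist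
integer sequences `(u_n)`, `(v_n)` with `u_n / Q_n → 1` and `(u_n ξ - v_n)/ε_n → 1`. -/
def TSet''' (ξ : ℝ) : Set ℝ :=
  {τ : ℝ | 0 < τ ∧ ∀ Q ε : ℕ → ℝ, (∀ n, 0 < Q n) → (∀ n, 0 < ε n) →
    Tendsto Q atTop atTop → Tendsto ε atTop (𝓝 0) →
    (∃ δ : ℕ → ℝ, Tendsto δ atTop (𝓝 0) ∧ ∀ n, ε n ≥ Q n ^ (-τ + δ n)) →
    ∃ u v : ℕ → ℤ,
      Tendsto (fun n => (u n : ℝ) / Q n) atTop (𝓝 1) ∧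
      Tendsto (fun n => ((u n : ℝ) * ξ - (v n : ℝ)) / ε n) atTop (𝓝 1)}

/-- `τ(ξ) = sup T(ξ)` (with `sup ∅ = 0`, as for the real `sSup`). -/
noncomputable def tauExp (ξ : ℝ) : ℝ := sSup (TSet ξ)

/-- `τ'(ξ) = sup T'(ξ)` (with `sup ∅ = 0`, as for the real `sSup`). -/
noncomputable def tauExp' (ξ : ℝ) : ℝ := sSup (TSet' ξ)

/-- `τ''(ξ) = sup T''(ξ)` (with `sup ∅ = 0`, as for the real `sSup`). -/
noncomputable def tauExp'' (ξ : ℝ) : ℝ := sSup (TSet'' ξ)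

/-- `τ'''(ξ) = sup T'''(ξ)` (with `sup ∅ = 0`, as for the real `sSup`). -/
noncomputable def tauExp''' (ξ : ℝ) : ℝ := sSup (TSet''' ξ)

lemma irr_lb (ξ : ℝ) (hξ : Irrational ξ) (M : ℕ) :
    ∃ B > 0, ∀ b : ℤ, b ≠ 0 → |b| ≤ (M : ℤ) → ∀ c : ℤ, B ≤ |(b : ℝ) * ξ - (c : ℝ)| := by
  rcases Nat.eq_zero_or_pos M with hM | hM
  · refine ⟨1, one_pos, fun b hb hbM c => absurd (abs_nonpos_iff.mp ?_) hb⟩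
    simpa [hM] using hbM
  · set f : ℕ → ℝ := fun k => |(k : ℝ) * ξ - (round ((k : ℝ) * ξ) : ℝ)| with hf
    have hs : (Finset.Icc 1 M).Nonempty := ⟨1, Finset.mem_Icc.mpr ⟨le_refl 1, hM⟩⟩
    refine ⟨(Finset.Icc 1 M).inf' hs f, ?_, ?_⟩
    · rw [gt_iff_lt, Finset.lt_inf'_iff]
      intro k hk
      rw [Finset.mem_Icc] at hk
      have hirr : Irrational ((k : ℝ) * ξ) := by
        have hk0 : ((k:ℤ)) ≠ 0 := by exact_mod_cast Nat.one_le_iff_ne_zero.mp hk.1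
        have := hξ.intCast_mul hk0
        simpa using this
      exact abs_pos.mpr (sub_ne_zero.mpr (hirr.ne_int _))
    · intro b hb hbM c
      have hk : b.natAbs ∈ Finset.Icc 1 M := by
        rw [Finset.mem_Icc]
        refine ⟨Nat.one_le_iff_ne_zero.mpr (Int.natAbs_ne_zero.mpr hb), ?_⟩
        exact_mod_cast (Int.abs_eq_natAbs b ▸ hbM)
      have h1 : (Finset.Icc 1 M).inf' hs f ≤ f b.natAbs := Finset.inf'_le f hk
      rcases le_or_gt 0 b with hb0 | hb0
      · have hcast : ((b.natAbs : ℕ) : ℝ) = (b : ℝ) := by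
          rw [Nat.cast_natAbs]
          push_cast
          exact abs_of_nonneg (by exact_mod_cast hb0)
        calc (Finset.Icc 1 M).inf' hs f ≤ f b.natAbs := h1
          _ ≤ |(b.natAbs : ℝ) * ξ - (c : ℝ)| := round_le _ c
          _ = |(b : ℝ) * ξ - (c : ℝ)| := by rw [hcast]
      · have hcast : ((b.natAbs : ℕ) : ℝ) = -(b : ℝ) := by
          rw [Nat.cast_natAbs]
          push_cast
          exact abs_of_neg (by exact_mod_cast hb0)
        calc (Finset.Icc 1 M).inf' hs f ≤ f b.natAbs := h1
          _ ≤ |(b.natAbs : ℝ) * ξ - ((-c : ℤ) : ℝ)| := round_le _ (-c)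
          _ = |(b : ℝ) * ξ - (c : ℝ)| := by
              rw [hcast]; push_cast; rw [← abs_neg]; ring_nf

lemma S_ge_one (ξ : ℝ) {μ : ℝ}
    (hμ : ∀ᶠ q : ℕ in atTop, ∀ p : ℤ, |ξ - (p : ℝ) / (q : ℝ)| > 1 / (q : ℝ) ^ μ) :
    1 ≤ μ := by
  by_contra hcon
  push_neg at hcon
  obtain ⟨Q, hQ⟩ := eventually_atTop.mp hμ
  set q : ℕ := max Q 2 with hqdef
  have hq2 : 2 ≤ q := le_max_right _ _
  have hq0 : (0:ℝ) < (q:ℝ) := by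
    have : 0 < q := by omega
    exact_mod_cast this
  have hq1R : (1:ℝ) ≤ (q:ℝ) := by
    have : 1 ≤ q := by omega
    exact_mod_cast this
  have hgt := hQ q (le_max_left _ _) (round ((q:ℝ) * ξ))
  have key : |ξ - ((round ((q:ℝ) * ξ) : ℤ) : ℝ) / (q:ℝ)| ≤ 1/(2*(q:ℝ)) := by
    have hrw : ξ - ((round ((q:ℝ) * ξ) : ℤ) : ℝ) / (q:ℝ)
        = ((q:ℝ) * ξ - (round ((q:ℝ) * ξ) : ℝ)) / (q:ℝ) := by
      field_simp
    rw [hrw, abs_div, abs_of_pos hq0, div_le_div_iff₀ hq0 (by positivity)]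
    have := abs_sub_round ((q:ℝ) * ξ)
    nlinarith [this]
  have h3 : 1/(q:ℝ)^μ < 1/(2*(q:ℝ)) := lt_of_lt_of_le hgt key
  have hqμ : (q:ℝ)^μ ≤ (q:ℝ) := by
    calc (q:ℝ)^μ ≤ (q:ℝ)^(1:ℝ) := Real.rpow_le_rpow_of_exponent_le hq1R hcon.le
    _ = (q:ℝ) := Real.rpow_one _
  have hpos : (0:ℝ) < (q:ℝ)^μ := Real.rpow_pos_of_pos hq0 μ
  rw [div_lt_div_iff₀ hpos (by positivity)] at h3
  nlinarith

lemma S_lb (ξ : ℝ) (hξ : Irrational ξ) {τ : ℝ} (hτ : τ ∈ TSet ξ) {μ : ℝ}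
    (hμ : ∀ᶠ q : ℕ in atTop, ∀ p : ℤ, |ξ - (p : ℝ) / (q : ℝ)| > 1 / (q : ℝ) ^ μ) :
    1 + τ ≤ μ := by
  obtain ⟨hτ0, u, v, hu, hL, ⟨δ₁, hδ₁, h1⟩, ⟨δ₂, hδ₂, h2⟩⟩ := hτ
  by_contra hcon
  push_neg at hcon
  set θ : ℝ := (1 + τ - μ)/2 with hθ
  have hθ0 : 0 < θ := by simp only [hθ]; linarith
  obtain ⟨Q, hQ⟩ := eventually_atTop.mp hμ
  obtain ⟨B, hB0, hB⟩ := irr_lb ξ hξ (max Q 2)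
  have hLabs : Tendsto (fun n => |(u n : ℝ) * ξ - (v n : ℝ)|) atTop (𝓝 0) := by
    have := hL.abs; simpa using this
  have hev1 : ∀ᶠ n in atTop, |(u n : ℝ) * ξ - (v n : ℝ)| < B :=
    hLabs.eventually (gt_mem_nhds hB0)
  have hev2 : ∀ᶠ n in atTop, |δ₂ n| < θ := by
    have h' : Tendsto (fun n => |δ₂ n|) atTop (𝓝 0) := by simpa using hδ₂.abs
    exact h'.eventually (gt_mem_nhds hθ0)
  obtain ⟨n, hn1, hn2⟩ := (hev1.and hev2).exists
  have hularge : ((max Q 2 : ℕ) : ℤ) < |u n| := by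
    by_contra hle
    push_neg at hle
    exact absurd (hB (u n) (hu n) hle (v n)) (not_le.mpr hn1)
  set q : ℕ := (u n).natAbs with hqdef
  have hq : ((q:ℕ):ℤ) = |u n| := (Int.abs_eq_natAbs (u n)).symm
  have hqgt : (max Q 2 : ℕ) < q := by
    have : ((max Q 2 : ℕ) : ℤ) < ((q:ℕ):ℤ) := by rw [hq]; exact hularge
    exact_mod_cast this
  have hqQ : Q ≤ q := by
    have := le_max_left Q 2
    omega
  have hq2 : 2 ≤ q := by
    have := le_max_right Q 2
    omega
  have hq1R : (1:ℝ) < (q:ℝ) := by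
    have : (1:ℕ) < q := by omega
    exact_mod_cast this
  have hq0 : (0:ℝ) < (q:ℝ) := by linarith
  have habs : ((q:ℕ):ℝ) = |(u n : ℝ)| := by
    have := congrArg (fun z : ℤ => (z : ℝ)) hq
    push_cast at this
    exact this
  set p : ℤ := if 0 ≤ u n then v n else -v n with hp
  have hLq : |(q:ℝ) * ξ - (p:ℝ)| = |(u n : ℝ) * ξ - (v n : ℝ)| := by
    rcases le_or_gt 0 (u n) with h0 | h0
    · rw [hp, if_pos h0, habs, abs_of_nonneg (show (0:ℝ) ≤ (u n : ℝ) by exact_mod_cast h0)]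
    · rw [hp, if_neg (not_le.mpr h0), habs,
        abs_of_neg (show (u n : ℝ) < 0 by exact_mod_cast h0)]
      push_cast
      rw [← abs_neg]
      ring_nf
  have hgt := hQ q hqQ p
  have hune : (1:ℝ) ≤ |(u n : ℝ)| := by rw [← habs]; exact_mod_cast (by omega : 1 ≤ q)
  have hup : |(u n : ℝ)*ξ - (v n : ℝ)| ≤ |(u n:ℝ)| ^ (-τ + θ) :=
    (h2 n).trans (Real.rpow_le_rpow_of_exponent_le hune
      (by linarith [(abs_lt.mp hn2).2]))
  have hfrac : |ξ - (p:ℝ)/(q:ℝ)| = |(q:ℝ)*ξ - (p:ℝ)| / (q:ℝ) := by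
    rw [show ξ - (p:ℝ)/(q:ℝ) = ((q:ℝ)*ξ - (p:ℝ))/(q:ℝ) by field_simp, abs_div, abs_of_pos hq0]
  have final : 1/(q:ℝ)^μ < (q:ℝ)^(-τ+θ-1) := by
    calc 1/(q:ℝ)^μ < |ξ - (p:ℝ)/(q:ℝ)| := hgt
    _ = |(q:ℝ)*ξ - (p:ℝ)| / (q:ℝ) := hfrac
    _ ≤ |(u n:ℝ)| ^ (-τ + θ) / (q:ℝ) := by
        rw [hLq]
        gcongr
    _ = (q:ℝ)^(-τ+θ) / (q:ℝ)^(1:ℝ) := by rw [← habs, Real.rpow_one]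
    _ = (q:ℝ)^(-τ+θ-1) := by rw [← Real.rpow_sub hq0]
  have final2 : (q:ℝ)^(-μ) < (q:ℝ)^(-τ+θ-1) := by
    rw [Real.rpow_neg hq0.le, ← one_div]
    exact final
  have := (Real.rpow_lt_rpow_left_iff hq1R).mp final2
  simp only [hθ] at this
  linarith

set_option maxHeartbeats 2000000 in
lemma mem_S_core (ξ : ℝ) (hξ : Irrational ξ) {τ : ℝ} (hτ : τ ∈ TSet ξ) {ε : ℝ} (hε : 0 < ε) :
    ∀ᶠ q : ℕ in atTop, ∀ p : ℤ, |ξ - (p : ℝ) / (q : ℝ)| > 1 / (q : ℝ) ^ (1 + 1/τ + ε) := by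
  classical
  obtain ⟨hτ0, u, v, hu, hL, ⟨δ₁, hδ₁, h1⟩, ⟨δ₂, hδ₂, h2⟩⟩ := hτ
  set μ : ℝ := 1 + 1/τ + ε with hμdef
  have hτinv : 0 < 1/τ := by positivity
  have hμ1 : (1:ℝ) ≤ μ := by simp only [hμdef]; linarith
  set L : ℕ → ℝ := fun n => |(u n : ℝ) * ξ - (v n : ℝ)| with hLdef
  have hLpos : ∀ n, 0 < L n := by
    intro n
    apply abs_pos.mpr
    apply sub_ne_zero.mpr
    exact (hξ.intCast_mul (hu n)).ne_int (v n)
  have hLabs : Tendsto L atTop (𝓝 0) := by simpa [hLdef] using hL.abs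
  -- choice of η
  set η : ℝ := min (τ/2) (min (ε/4) (ε*τ^2/(4*(τ+1)))) with hηdef
  have hη0 : 0 < η := by
    apply lt_min (by linarith) (lt_min (by linarith) (by positivity))
  have hητ : η ≤ τ/2 := min_le_left _ _
  have hηε : η ≤ ε/4 := (min_le_right _ _).trans (min_le_left _ _)
  have hη3 : η ≤ ε*τ^2/(4*(τ+1)) := (min_le_right _ _).trans (min_le_right _ _)
  have hτη : 0 < τ - η := by linarith
  set κ : ℝ := (1+η)/(τ-η) with hκdef
  have hκ0 : 0 < κ := div_pos (by linarith) hτη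
  have hκle : κ ≤ 1/τ + ε/2 := by
    rw [hκdef, div_le_iff₀ hτη]
    have ht : τ * (1/τ) = 1 := mul_one_div_cancel (ne_of_gt hτ0)
    have h3 : η * (4*(τ+1)) ≤ ε*τ^2 := by
      rw [← le_div_iff₀ (by positivity)]
      exact hη3
    nlinarith [mul_pos hη0 hτ0, mul_pos hε hτ0, sq_nonneg τ, mul_pos (mul_pos hε hτ0) hτ0]
  have hexp : ε/4 ≤ μ - 1 - η - κ := by
    simp only [hμdef]
    linarith
  -- N
  have hevδ1 : ∀ᶠ n in atTop, |δ₁ n| < η := by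
    have h' : Tendsto (fun n => |δ₁ n|) atTop (𝓝 0) := by simpa using hδ₁.abs
    exact h'.eventually (gt_mem_nhds hη0)
  have hevδ2 : ∀ᶠ n in atTop, |δ₂ n| < η := by
    have h' : Tendsto (fun n => |δ₂ n|) atTop (𝓝 0) := by simpa using hδ₂.abs
    exact h'.eventually (gt_mem_nhds hη0)
  have hevL1 : ∀ᶠ n in atTop, L n < 1 := hLabs.eventually (gt_mem_nhds one_pos)
  obtain ⟨N, hN⟩ := eventually_atTop.mp ((hevδ1.and hevδ2).and hevL1)
  obtain ⟨BN, hBN0, hBNle⟩ : ∃ BN > 0, ∀ m ≤ N, BN ≤ L m := by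
    refine ⟨(Finset.range (N+1)).inf' (Finset.nonempty_range_iff.mpr (Nat.succ_ne_zero N)) L, ?_, ?_⟩
    · rw [gt_iff_lt, Finset.lt_inf'_iff]
      exact fun m _ => hLpos m
    · intro m hm
      exact Finset.inf'_le L (Finset.mem_range.mpr (by omega))
  set C : ℝ := (2:ℝ) ^ (κ + 1 + η) with hCdef
  have hC0 : 0 < C := Real.rpow_pos_of_pos two_pos _
  by_contra hcon
  -- frequently bad q
  have Hfreq : ∀ M : ℕ, ∃ q ≥ M, ∃ p : ℤ, |ξ - (p:ℝ)/(q:ℝ)| ≤ 1/(q:ℝ)^μ := by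
    intro M
    obtain ⟨q, hqM, hq⟩ := frequently_atTop.mp (not_eventually.mp hcon) M
    push_neg at hq
    obtain ⟨p, hp⟩ := hq
    exact ⟨q, hqM, p, hp⟩
  -- coprime bad pairs with arbitrarily large q
  have Hc : ∀ M : ℕ, ∃ q : ℕ, M < q ∧ ∃ p : ℤ,
      IsCoprime p ((q:ℕ):ℤ) ∧ |ξ - (p:ℝ)/(q:ℝ)| ≤ 1/(q:ℝ)^μ := by
    intro M
    obtain ⟨B, hB0, hB⟩ := irr_lb ξ hξ M
    obtain ⟨q, hqM₀, p, hple⟩ := Hfreq (max (M+1) (⌈((M:ℝ)+1)/B⌉₊ + 1))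
    have hq1 : 1 ≤ q := le_trans (le_trans (by omega) (le_max_left _ _)) hqM₀
    have hq0R : (0:ℝ) < (q:ℝ) := by exact_mod_cast hq1
    have hqBig : ((M:ℝ)+1)/B < (q:ℝ) := by
      have h' : ⌈((M:ℝ)+1)/B⌉₊ < q := by
        have := le_trans (le_max_right (M+1) (⌈((M:ℝ)+1)/B⌉₊ + 1)) hqM₀
        omega
      calc ((M:ℝ)+1)/B ≤ (⌈((M:ℝ)+1)/B⌉₊ : ℝ) := Nat.le_ceil _
      _ < (q:ℝ) := by exact_mod_cast h'
    have hqmu : (q:ℝ) ≤ (q:ℝ)^μ := by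
      nth_rw 1 [← Real.rpow_one (q:ℝ)]
      exact Real.rpow_le_rpow_of_exponent_le (by exact_mod_cast hq1) hμ1
    have hsmall : 1/(q:ℝ)^μ < B/((M:ℝ)+1) := by
      rw [div_lt_div_iff₀ (by positivity) (by positivity)]
      rw [div_lt_iff₀ hB0] at hqBig
      nlinarith [hqmu, hB0]
    -- gcd reduction
    set g : ℕ := Int.gcd p ((q:ℕ):ℤ) with hg
    have hq0Z : ((q:ℕ):ℤ) ≠ 0 := by exact_mod_cast (by omega : q ≠ 0)
    have hgpos : 0 < g := Int.gcd_pos_iff.mpr (Or.inr hq0Z)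
    have hgp : ((g:ℕ):ℤ) ∣ p := Int.gcd_dvd_left _ _
    have hgq : ((g:ℕ):ℤ) ∣ ((q:ℕ):ℤ) := Int.gcd_dvd_right _ _
    have hgqN : g ∣ q := by exact_mod_cast hgq
    set q' : ℕ := q / g with hq'
    set p' : ℤ := p / (g:ℤ) with hp'
    have hq'pos : 0 < q' := Nat.div_pos (Nat.le_of_dvd (by omega) hgqN) hgpos
    have hq'cast : ((q':ℕ):ℤ) = ((q:ℕ):ℤ) / ((g:ℕ):ℤ) := by
      exact Int.natCast_ediv q g
    have hcop : IsCoprime p' ((q':ℕ):ℤ) := by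
      rw [Int.isCoprime_iff_gcd_eq_one, hp', hq'cast]
      exact Int.gcd_div_gcd_div_gcd hgpos
    have hpfac : p = p' * (g:ℤ) := (Int.ediv_mul_cancel hgp).symm
    have hqfac : q = q' * g := (Nat.div_mul_cancel hgqN).symm
    have hfrac : (p:ℝ)/(q:ℝ) = (p':ℝ)/(q':ℝ) := by
      have hcq : ((q:ℕ):ℝ) = ((q':ℕ):ℝ) * ((g:ℕ):ℝ) := by exact_mod_cast congrArg (Nat.cast : ℕ → ℝ) hqfac
      have hgR : ((g:ℕ):ℝ) ≠ 0 := by exact_mod_cast (by omega : g ≠ 0)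
      have hq'R : ((q':ℕ):ℝ) ≠ 0 := by exact_mod_cast (by omega : q' ≠ 0)
      rw [hpfac, hcq]
      push_cast
      field_simp
    have hq'q : q' ≤ q := Nat.div_le_self q g
    have hmono : 1/(q:ℝ)^μ ≤ 1/(q':ℝ)^μ := by
      apply one_div_le_one_div_of_le (Real.rpow_pos_of_pos (by exact_mod_cast hq'pos) μ)
      apply Real.rpow_le_rpow (by positivity) (by exact_mod_cast hq'q) (by linarith)
    have hple' : |ξ - (p':ℝ)/(q':ℝ)| ≤ 1/(q':ℝ)^μ := by
      rw [← hfrac]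
      exact hple.trans hmono
    refine ⟨q', ?_, p', hcop, hple'⟩
    -- q' > M
    by_contra hle2
    push_neg at hle2
    have hq'0R : (0:ℝ) < (q':ℝ) := by exact_mod_cast hq'pos
    have hBle : B ≤ |(q':ℝ) * ξ - (p':ℝ)| := by
      have := hB ((q':ℕ):ℤ) (by exact_mod_cast (by omega : q' ≠ 0))
        (by rw [abs_of_nonneg (by positivity)]; exact_mod_cast hle2) p'
      exact_mod_cast this
    have hfr : |ξ - (p':ℝ)/(q':ℝ)| = |(q':ℝ)*ξ - (p':ℝ)| / (q':ℝ) := by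
      rw [show ξ - (p':ℝ)/(q':ℝ) = ((q':ℝ)*ξ - (p':ℝ))/(q':ℝ) by field_simp,
        abs_div, abs_of_pos hq'0R]
    have hlow : B/((M:ℝ)+1) ≤ |ξ - (p':ℝ)/(q':ℝ)| := by
      rw [hfr]
      exact div_le_div₀ (abs_nonneg _) hBle (by exact_mod_cast hq'pos)
        (by exact_mod_cast (by omega : q' ≤ M + 1))
    have : B/((M:ℝ)+1) < B/((M:ℝ)+1) :=
      lt_of_le_of_lt (hlow.trans ((hfrac ▸ hple : |ξ - (p':ℝ)/(q':ℝ)| ≤ 1/(q:ℝ)^μ))) hsmall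
    exact lt_irrefl _ this
  -- main argument
  obtain ⟨q, hqM, p, hcop, hple⟩ :=
    Hc (max (⌈1/(2*BN)⌉₊ + 1) (⌈C^((4:ℝ)/ε)⌉₊ + 1))
  have hq1 : 1 ≤ q := by
    have := le_max_left (⌈1/(2*BN)⌉₊ + 1) (⌈C^((4:ℝ)/ε)⌉₊ + 1)
    omega
  have hq0R : (0:ℝ) < (q:ℝ) := by exact_mod_cast (by omega : 0 < q)
  have hq1R : (1:ℝ) ≤ (q:ℝ) := by exact_mod_cast hq1
  have hq0Z : ((q:ℕ):ℤ) ≠ 0 := by exact_mod_cast (by omega : q ≠ 0)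
  set e : ℝ := |(q:ℝ)*ξ - (p:ℝ)| with hedef
  have hefrac : |ξ - (p:ℝ)/(q:ℝ)| = e / (q:ℝ) := by
    rw [hedef, show ξ - (p:ℝ)/(q:ℝ) = ((q:ℝ)*ξ - (p:ℝ))/(q:ℝ) by field_simp,
      abs_div, abs_of_pos hq0R]
  have hqμpos : (0:ℝ) < (q:ℝ)^μ := Real.rpow_pos_of_pos hq0R μ
  have he : e ≤ (q:ℝ)^(1-μ) := by
    have h' : e / (q:ℝ) ≤ 1/(q:ℝ)^μ := hefrac ▸ hple
    rw [div_le_div_iff₀ hq0R hqμpos] at h'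
    have h'' : e ≤ (q:ℝ) / (q:ℝ)^μ := (le_div_iff₀ hqμpos).mpr (by linarith)
    rw [show (1:ℝ)-μ = 1 + (-μ) by ring, Real.rpow_add hq0R, Real.rpow_one,
      Real.rpow_neg hq0R.le, ← div_eq_mul_inv]
    exact h''
  have he0 : 0 < e := by
    rw [hedef]
    apply abs_pos.mpr
    apply sub_ne_zero.mpr
    have := (hξ.intCast_mul hq0Z).ne_int p
    intro hcontra
    apply this
    push_cast
    push_cast at hcontra
    exact hcontra
  -- minimal n with L n < 1/(2q)
  have hex : ∃ n, L n < 1/(2*(q:ℝ)) :=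
    (hLabs.eventually (gt_mem_nhds (by positivity))).exists
  set n : ℕ := Nat.find hex with hndef
  have hnlt : L n < 1/(2*(q:ℝ)) := Nat.find_spec hex
  have hmin : ∀ m, m < n → 1/(2*(q:ℝ)) ≤ L m := fun m hm => not_lt.mp (Nat.find_min hex hm)
  have hqBN : 1/(2*(q:ℝ)) < BN := by
    have h1' : ⌈1/(2*BN)⌉₊ < q := by
      have := le_max_left (⌈1/(2*BN)⌉₊ + 1) (⌈C^((4:ℝ)/ε)⌉₊ + 1)
      omega
    have h2' : 1/(2*BN) < (q:ℝ) := by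
      calc 1/(2*BN) ≤ (⌈1/(2*BN)⌉₊:ℝ) := Nat.le_ceil _
      _ < (q:ℝ) := by exact_mod_cast h1'
    rw [div_lt_iff₀ (by positivity)] at h2' ⊢
    nlinarith
  have hNn : N < n := by
    by_contra hle
    push_neg at hle
    exact absurd (hnlt.trans hqBN) (not_lt.mpr (hBNle n hle))
  set m : ℕ := n - 1 with hmdef
  have hmn : m + 1 = n := by omega
  have hmN : N ≤ m := by omega
  have hLm_lb : 1/(2*(q:ℝ)) ≤ L m := hmin m (by omega)
  have hLm1 : L m < 1 := (hN m hmN).2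
  have hδ1m : |δ₁ m| < η := (hN m hmN).1.1
  have hδ2n : |δ₂ n| < η := (hN n (by omega)).1.2
  have hLn_eq : L n = L m ^ (1 + δ₁ m) := by rw [← hmn]; exact h1 m
  have Lnlb : (1/(2*(q:ℝ)))^((1:ℝ)+η) ≤ L n := by
    rw [hLn_eq]
    calc (1/(2*(q:ℝ)))^((1:ℝ)+η) ≤ L m ^ ((1:ℝ)+η) :=
        Real.rpow_le_rpow (by positivity) hLm_lb (by linarith)
    _ ≤ L m ^ (1 + δ₁ m) :=
        Real.rpow_le_rpow_of_exponent_ge (hLpos m) hLm1.le (by linarith [(abs_lt.mp hδ1m).2])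
  have hun1 : (1:ℝ) ≤ |(u n : ℝ)| := by
    have := Int.one_le_abs (hu n)
    exact_mod_cast this
  have hLn_ub : L n ≤ |(u n:ℝ)| ^ (-τ + η) :=
    (h2 n).trans (Real.rpow_le_rpow_of_exponent_le hun1 (by linarith [(abs_lt.mp hδ2n).2]))
  have h2qpos : (0:ℝ) < 2*(q:ℝ) := by linarith
  have hinvpow : (1/(2*(q:ℝ)))^((1:ℝ)+η) = (2*(q:ℝ))^(-(1+η)) := by
    rw [one_div, ← Real.rpow_neg_one (2*(q:ℝ))]
    rw [← Real.rpow_mul h2qpos.le]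
    ring_nf
  have hun_ub : |(u n:ℝ)| ≤ (2*(q:ℝ))^κ := by
    have key : (2*(q:ℝ))^(-(1+η)) ≤ |(u n:ℝ)|^(-(τ-η)) := by
      rw [← hinvpow, show -(τ-η) = -τ+η by ring]
      exact Lnlb.trans hLn_ub
    have h1' : |(u n:ℝ)|^(τ-η) ≤ (2*(q:ℝ))^((1:ℝ)+η) := by
      have hi := inv_anti₀ (Real.rpow_pos_of_pos h2qpos _) key
      rw [← Real.rpow_neg (by positivity : (0:ℝ) ≤ |(u n:ℝ)|), neg_neg] at hi
      rw [← Real.rpow_neg h2qpos.le, neg_neg] at hi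
      exact hi
    have h2' := Real.rpow_le_rpow (by positivity) h1' (le_of_lt (one_div_pos.mpr hτη))
    rw [← Real.rpow_mul (abs_nonneg _), ← Real.rpow_mul h2qpos.le] at h2'
    rw [mul_one_div, div_self (ne_of_gt hτη), Real.rpow_one, mul_one_div] at h2'
    exact h2'
  have hqL : (q:ℝ) * L n < 1/2 := by
    rw [lt_div_iff₀ h2qpos] at hnlt
    nlinarith [hLpos n]
  have h2negpos : (0:ℝ) < (2:ℝ)^(-(1+η)) := Real.rpow_pos_of_pos two_pos _
  have hpowfold : (q:ℝ) * ((q:ℝ)^(-(1+η)) * (q:ℝ)^(μ-1)) = (q:ℝ)^(μ-1-η) := by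
    rw [← Real.rpow_add hq0R]
    nth_rw 1 [← Real.rpow_one (q:ℝ)]
    rw [← Real.rpow_add hq0R]
    ring_nf
  have hq1mu_pos : (0:ℝ) < (q:ℝ)^(1-μ) := Real.rpow_pos_of_pos hq0R _
  have hqinv : ((q:ℝ)^(1-μ))⁻¹ = (q:ℝ)^(μ-1) := by
    rw [← Real.rpow_neg hq0R.le]
    ring_nf
  have hlow : (2:ℝ)^(-(1+η)) * (q:ℝ)^(μ-1-η) ≤ |(u n:ℝ)| := by
    rcases eq_or_ne (u n * p - v n * ((q:ℕ):ℤ)) 0 with hD | hD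
    · -- degenerate case
      have heq : u n * p = v n * ((q:ℕ):ℤ) := sub_eq_zero.mp hD
      have hdvd : ((q:ℕ):ℤ) ∣ u n := by
        refine (hcop.symm).dvd_of_dvd_mul_right ⟨v n, ?_⟩
        rw [heq]; ring
      obtain ⟨t, hut⟩ := hdvd
      have ht0 : t ≠ 0 := by
        rintro rfl
        rw [mul_zero] at hut
        exact hu n hut
      have hvt : v n = t * p := by
        have h' : ((q:ℕ):ℤ) * (t * p) = ((q:ℕ):ℤ) * (v n) := by
          rw [hut] at heq
          linear_combination heq
        exact (mul_left_cancel₀ hq0Z h').symm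
      have hLnt : L n = |(t:ℝ)| * e := by
        rw [hLdef, hedef]
        have h' : (u n : ℝ)*ξ - (v n : ℝ) = (t:ℝ) * ((q:ℝ)*ξ - (p:ℝ)) := by
          rw [show (u n : ℝ) = ((q:ℕ):ℝ)*(t:ℝ) by exact_mod_cast congrArg (Int.cast : ℤ → ℝ) hut,
            show (v n : ℝ) = (t:ℝ)*(p:ℝ) by exact_mod_cast congrArg (Int.cast : ℤ → ℝ) hvt]
          ring
        simp only []
        rw [h', abs_mul]
      have hunq : |(u n:ℝ)| = (q:ℝ) * |(t:ℝ)| := by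
        rw [show (u n : ℝ) = ((q:ℕ):ℝ)*(t:ℝ) by exact_mod_cast congrArg (Int.cast : ℤ → ℝ) hut,
          abs_mul, abs_of_pos hq0R]
      have c1 : (2:ℝ)^(-(1+η)) * (q:ℝ)^(-(1+η)) ≤ |(t:ℝ)| * e := by
        calc (2:ℝ)^(-(1+η)) * (q:ℝ)^(-(1+η)) = (2*(q:ℝ))^(-(1+η)) :=
            (Real.mul_rpow (by norm_num) hq0R.le).symm
        _ = (1/(2*(q:ℝ)))^((1:ℝ)+η) := hinvpow.symm
        _ ≤ L n := Lnlb
        _ = |(t:ℝ)| * e := hLnt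
      have c2 : (2:ℝ)^(-(1+η)) * (q:ℝ)^(-(1+η)) ≤ |(t:ℝ)| * (q:ℝ)^(1-μ) :=
        c1.trans (mul_le_mul_of_nonneg_left he (abs_nonneg _))
      have c3 : (2:ℝ)^(-(1+η)) * (q:ℝ)^(-(1+η)) * (q:ℝ)^(μ-1) ≤ |(t:ℝ)| := by
        have c3' : (2:ℝ)^(-(1+η)) * (q:ℝ)^(-(1+η)) / (q:ℝ)^(1-μ) ≤ |(t:ℝ)| :=
          (div_le_iff₀ hq1mu_pos).mpr c2
        rw [div_eq_mul_inv, hqinv] at c3'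
        exact c3'
      calc (2:ℝ)^(-(1+η)) * (q:ℝ)^(μ-1-η)
          = (q:ℝ) * ((2:ℝ)^(-(1+η)) * (q:ℝ)^(-(1+η)) * (q:ℝ)^(μ-1)) := by
            rw [show (2:ℝ)^(-(1+η)) * (q:ℝ)^(-(1+η)) * (q:ℝ)^(μ-1)
              = (2:ℝ)^(-(1+η)) * ((q:ℝ)^(-(1+η)) * (q:ℝ)^(μ-1)) by ring,
              show (q:ℝ) * ((2:ℝ)^(-(1+η)) * ((q:ℝ)^(-(1+η)) * (q:ℝ)^(μ-1)))
              = (2:ℝ)^(-(1+η)) * ((q:ℝ) * ((q:ℝ)^(-(1+η)) * (q:ℝ)^(μ-1))) by ring,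
              hpowfold]
        _ ≤ (q:ℝ) * |(t:ℝ)| := mul_le_mul_of_nonneg_left c3 hq0R.le
        _ = |(u n:ℝ)| := hunq.symm
    · -- nondegenerate case
      have hD1 : (1:ℝ) ≤ |((u n * p - v n * ((q:ℕ):ℤ) : ℤ):ℝ)| := by
        have := Int.one_le_abs hD
        exact_mod_cast this
      have hDle : |((u n * p - v n * ((q:ℕ):ℤ) : ℤ):ℝ)| ≤ |(u n:ℝ)| * e + (q:ℝ) * L n := by
        have hid : ((u n * p - v n * ((q:ℕ):ℤ) : ℤ):ℝ)
            = (u n:ℝ)*((p:ℝ) - (q:ℝ)*ξ) + ((u n:ℝ)*ξ - (v n:ℝ))*(q:ℝ) := by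
          push_cast
          ring
        rw [hid]
        calc |(u n:ℝ)*((p:ℝ) - (q:ℝ)*ξ) + ((u n:ℝ)*ξ - (v n:ℝ))*(q:ℝ)|
            ≤ |(u n:ℝ)*((p:ℝ) - (q:ℝ)*ξ)| + |((u n:ℝ)*ξ - (v n:ℝ))*(q:ℝ)| := abs_add_le _ _
        _ = |(u n:ℝ)| * e + (q:ℝ) * L n := by
            rw [abs_mul, abs_mul, hedef, abs_sub_comm ((p:ℝ)) ((q:ℝ)*ξ), abs_of_pos hq0R,
              hLdef]
            ring
      have h12 : (1:ℝ)/2 ≤ |(u n:ℝ)| * e := by linarith [hD1.trans hDle]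
      have h13 : (1:ℝ)/2 ≤ |(u n:ℝ)| * (q:ℝ)^(1-μ) :=
        h12.trans (mul_le_mul_of_nonneg_left he (abs_nonneg _))
      have h14 : (1/2) * (q:ℝ)^(μ-1) ≤ |(u n:ℝ)| := by
        have h14' : (1:ℝ)/2 / (q:ℝ)^(1-μ) ≤ |(u n:ℝ)| := (div_le_iff₀ hq1mu_pos).mpr (by linarith)
        rw [div_eq_mul_inv, hqinv] at h14'
        exact h14'
      have h15 : (2:ℝ)^(-(1+η)) ≤ 1/2 := by
        rw [show (1:ℝ)/2 = (2:ℝ)^(-(1:ℝ)) by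
          rw [Real.rpow_neg (by norm_num : (0:ℝ) ≤ 2), Real.rpow_one, one_div]]
        exact Real.rpow_le_rpow_of_exponent_le one_le_two (by linarith)
      have h16 : (q:ℝ)^(μ-1-η) ≤ (q:ℝ)^(μ-1) :=
        Real.rpow_le_rpow_of_exponent_le hq1R (by linarith)
      calc (2:ℝ)^(-(1+η)) * (q:ℝ)^(μ-1-η) ≤ (1/2) * (q:ℝ)^(μ-1) :=
          mul_le_mul h15 h16 (by positivity) (by norm_num)
      _ ≤ |(u n:ℝ)| := h14
  -- combine
  have hcomb : (2:ℝ)^(-(1+η)) * (q:ℝ)^(μ-1-η) ≤ (2:ℝ)^κ * (q:ℝ)^κ := by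
    calc (2:ℝ)^(-(1+η)) * (q:ℝ)^(μ-1-η) ≤ |(u n:ℝ)| := hlow
    _ ≤ (2*(q:ℝ))^κ := hun_ub
    _ = (2:ℝ)^κ * (q:ℝ)^κ := Real.mul_rpow (by norm_num) hq0R.le
  have hstep : (q:ℝ)^(μ-1-η-κ) ≤ C := by
    have h1' : (q:ℝ)^(μ-1-η) ≤ C * (q:ℝ)^κ := by
      calc (q:ℝ)^(μ-1-η)
          = ((2:ℝ)^(-(1+η)))⁻¹ * ((2:ℝ)^(-(1+η)) * (q:ℝ)^(μ-1-η)) := by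
            field_simp
      _ ≤ ((2:ℝ)^(-(1+η)))⁻¹ * ((2:ℝ)^κ * (q:ℝ)^κ) :=
            mul_le_mul_of_nonneg_left hcomb (inv_nonneg.mpr h2negpos.le)
      _ = C * (q:ℝ)^κ := by
            rw [← Real.rpow_neg (by norm_num : (0:ℝ) ≤ 2), neg_neg, hCdef,
              ← mul_assoc, ← Real.rpow_add two_pos]
            ring_nf
    have hκq : (0:ℝ) < (q:ℝ)^κ := Real.rpow_pos_of_pos hq0R κ
    rw [show μ-1-η-κ = (μ-1-η) + (-κ) by ring, Real.rpow_add hq0R]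
    calc (q:ℝ)^(μ-1-η) * (q:ℝ)^(-κ) ≤ (C * (q:ℝ)^κ) * (q:ℝ)^(-κ) :=
        mul_le_mul_of_nonneg_right h1' (Real.rpow_pos_of_pos hq0R _).le
    _ = C := by
        rw [mul_assoc, ← Real.rpow_add hq0R]
        simp
  have hbig : C < (q:ℝ)^(ε/4) := by
    have h1' : C^((4:ℝ)/ε) < (q:ℝ) := by
      have h'' : ⌈C^((4:ℝ)/ε)⌉₊ < q := by
        have := le_max_right (⌈1/(2*BN)⌉₊ + 1) (⌈C^((4:ℝ)/ε)⌉₊ + 1)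
        omega
      calc C^((4:ℝ)/ε) ≤ (⌈C^((4:ℝ)/ε)⌉₊:ℝ) := Nat.le_ceil _
      _ < (q:ℝ) := by exact_mod_cast h''
    have h2' := Real.rpow_lt_rpow (by positivity) h1' (by positivity : (0:ℝ) < ε/4)
    rw [← Real.rpow_mul hC0.le, show (4:ℝ)/ε * (ε/4) = 1 by field_simp,
      Real.rpow_one] at h2'
    exact h2'
  have hfin : (q:ℝ)^(ε/4) ≤ C :=
    le_trans (Real.rpow_le_rpow_of_exponent_le hq1R (by linarith)) hstep
  linarith


theorem tau_le_inv_mu_sub_one (ξ : ℝ) (hξ : Irrational ξ) :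
    ((tauExp ξ : ℝ) : EReal) ≤ (irrationalityExponent ξ - 1)⁻¹ := by
  set S : Set EReal := {x : EReal | ∃ μ : ℝ, x = (μ : EReal) ∧
    ∀ᶠ q : ℕ in atTop, ∀ p : ℤ, |ξ - (p : ℝ) / (q : ℝ)| > 1 / (q : ℝ) ^ μ} with hS
  have hIdef : irrationalityExponent ξ = sInf S := rfl
  have h1I : (1 : EReal) ≤ sInf S := by
    apply le_sInf
    rintro x ⟨μ, rfl, hμ⟩
    exact_mod_cast S_ge_one ξ hμ
  rcases Set.eq_empty_or_nonempty (TSet ξ) with hT | hT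
  · rw [show tauExp ξ = 0 by rw [tauExp, hT, Real.sSup_empty]]
    have h0 : (0:EReal) ≤ sInf S - 1 := by
      have h' := EReal.sub_le_sub h1I (le_refl (1:EReal))
      have h'' : (1:EReal) - 1 = 0 := by
        rw [← EReal.coe_one, ← EReal.coe_sub]
        norm_num
      rw [h''] at h'
      exact h'
    rw [hIdef]
    simpa using EReal.inv_nonneg_of_nonneg h0
  · obtain ⟨τ₀, hτ₀⟩ := hT
    have hτ₀pos : 0 < τ₀ := hτ₀.1
    have hmemS : ∀ τ ∈ TSet ξ, ∀ ε : ℝ, 0 < ε → ((1+1/τ+ε : ℝ) : EReal) ∈ S :=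
      fun τ hτ ε hε => ⟨1+1/τ+ε, rfl, mem_S_core ξ hξ hτ hε⟩
    have hIub : sInf S ≤ ((1+1/τ₀+1 : ℝ) : EReal) := sInf_le (hmemS τ₀ hτ₀ 1 one_pos)
    have hIlb : ((1+τ₀ : ℝ) : EReal) ≤ sInf S := by
      apply le_sInf
      rintro x ⟨μ, rfl, hμ⟩
      exact EReal.coe_le_coe_iff.mpr (S_lb ξ hξ hτ₀ hμ)
    have hne_top : sInf S ≠ ⊤ := (lt_of_le_of_lt hIub (EReal.coe_lt_top _)).ne
    have hne_bot : sInf S ≠ ⊥ := (lt_of_lt_of_le (EReal.bot_lt_coe _) hIlb).ne'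
    set r : ℝ := (sInf S).toReal with hr
    have hrI : sInf S = (r : EReal) := (EReal.coe_toReal hne_top hne_bot).symm
    have hr1 : 1 + τ₀ ≤ r := by
      rw [hrI] at hIlb
      exact_mod_cast hIlb
    have hkey : ∀ τ ∈ TSet ξ, τ ≤ (r-1)⁻¹ := by
      intro τ hτ
      have hτpos : 0 < τ := hτ.1
      have hrub : ∀ ε : ℝ, 0 < ε → r ≤ (1+1/τ) + ε := by
        intro ε hε
        have h' := sInf_le (hmemS τ hτ ε hε)
        rw [hrI] at h'
        have h'' : r ≤ 1+1/τ+ε := by exact_mod_cast h'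
        linarith
      have hrub' : r ≤ 1 + 1/τ := le_of_forall_pos_le_add hrub
      have hrpos : 0 < r - 1 := by linarith
      rw [inv_eq_one_div, le_div_iff₀ hrpos]
      have h2 : r - 1 ≤ 1/τ := by linarith
      calc τ * (r-1) ≤ τ * (1/τ) := mul_le_mul_of_nonneg_left h2 hτpos.le
      _ = 1 := mul_one_div_cancel (ne_of_gt hτpos)
    have hsup : tauExp ξ ≤ (r-1)⁻¹ :=
      Real.sSup_le hkey (inv_pos.mpr (by linarith)).le
    rw [hIdef, hrI, show ((r:ℝ):EReal) - 1 = ((r - 1 : ℝ):EReal) by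
        rw [← EReal.coe_one, ← EReal.coe_sub], ← EReal.coe_inv]
    exact_mod_cast hsup
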